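/- If μ > 0, then for every nonzero real x one has |exp_μ(ix)| < 1. -/

import Mathlib

open Finset

/-- The μ-deformed factorial function γ_μ. -/
noncomputable def gammaMu (μ : ℝ) : ℕ → ℝ
  | 0 => 1
  | n + 1 => ((n + 1 : ℝ) + 2 * μ * (if Odd (n + 1) then 1 else 0)) * gammaMu μ n

/-- The μ-deformed binomial coefficient C_μ(n,k), zero outside 0 ≤ k ≤ n. -/
noncomputable def binomMu (μ : ℝ) (n : ℕ) (k : ℤ) : ℝ :=
  if 0 ≤ k ∧ k ≤ (n : ℤ) then gammaMu μ n / (gammaMu μ (n - k.toNat) * gammaMu μ k.toNat) else 0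

/-- The n-th μ-deformed binomial polynomial p_{n,μ}(x,y). -/
noncomputable def pMu (μ : ℝ) (n : ℕ) (x y : ℂ) : ℂ :=
  ∑ k ∈ Finset.range (n + 1), (binomMu μ n k : ℂ) * x ^ k * y ^ (n - k)

/-- The μ-deformed exponential function. -/
noncomputable def expMu (μ : ℝ) (z : ℂ) : ℂ :=
  ∑' n : ℕ, z ^ n / (gammaMu μ n : ℂ)

/-- The Bessel function of the first kind of order ν, for positive real argument. -/
noncomputable def besselJ (ν x : ℝ) : ℝ :=
  ∑' m : ℕ, ((-1) ^ m / (Nat.factorial m * Real.Gamma (ν + m + 1))) * (x / 2) ^ ((2 * m : ℝ) + ν)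


variable {μ : ℝ}

lemma gammaMu_pos (hμ : 0 ≤ μ) : ∀ n, 0 < gammaMu μ n
  | 0 => by simp [gammaMu]
  | n + 1 => by
    have := gammaMu_pos hμ n
    have h1 : (0:ℝ) < (n + 1 : ℝ) + 2 * μ * (if Odd (n + 1) then 1 else 0) := by
      have : (0:ℝ) ≤ 2 * μ * (if Odd (n + 1) then 1 else 0) := by positivity
      positivity
    simpa [gammaMu] using mul_pos h1 this

lemma factorial_le_gammaMu (hμ : 0 ≤ μ) : ∀ n, (Nat.factorial n : ℝ) ≤ gammaMu μ n
  | 0 => by simp [gammaMu]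
  | n + 1 => by
    have ih := factorial_le_gammaMu hμ n
    have h1 : ((n:ℝ) + 1) ≤ (n + 1 : ℝ) + 2 * μ * (if Odd (n + 1) then 1 else 0) := by
      have : (0:ℝ) ≤ 2 * μ * (if Odd (n + 1) then 1 else 0) := by positivity
      linarith
    have hfac : (0:ℝ) ≤ (Nat.factorial n : ℝ) := by positivity
    calc (Nat.factorial (n+1) : ℝ) = ((n:ℝ)+1) * (Nat.factorial n : ℝ) := by
          rw [Nat.factorial_succ]; push_cast; ring
      _ ≤ ((n + 1 : ℝ) + 2 * μ * (if Odd (n + 1) then 1 else 0)) * gammaMu μ n := by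
          apply mul_le_mul h1 ih hfac; linarith
      _ = gammaMu μ (n+1) := by simp [gammaMu]

lemma gammaMu_odd (k : ℕ) : gammaMu μ (2*k+1) = (2*k+1+2*μ) * gammaMu μ (2*k) := by
  have h : Odd (2*k+1) := ⟨k, by ring⟩
  show gammaMu μ (2*k+1) = _
  rw [show 2*k+1 = (2*k)+1 from rfl]
  simp only [gammaMu, h, if_true]
  push_cast; ring_nf

lemma gammaMu_even (k : ℕ) : gammaMu μ (2*k+2) = (2*k+2) * gammaMu μ (2*k+1) := by
  have h : ¬ Odd (2*k+2) := by simp [Nat.odd_iff, Nat.add_mod, Nat.mul_mod]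
  rw [show 2*k+2 = (2*k+1)+1 from rfl]
  simp only [gammaMu, h, if_false]
  push_cast; ring_nf

lemma summable_master (M : ℝ) (hM : 0 ≤ M) :
    Summable (fun k : ℕ => ((2*(k:ℝ))+2) * M^(2*k) / (Nat.factorial (2*k))) := by
  have h1 : Summable (fun n : ℕ => ((n:ℝ)+2) * M^n / (Nat.factorial n)) := by
    apply Summable.of_nonneg_of_le (f := fun n : ℕ => 4 * ((2*M)^n / (Nat.factorial n)))
    · intro n; positivity
    · intro n
      have h2 : ((n:ℝ)+2) ≤ 4 * 2^n := by
        have := Nat.lt_two_pow_self (n := n+2)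
        have h3 : ((n:ℝ)+2) < 2^(n+2) := by exact_mod_cast this
        have : (2:ℝ)^(n+2) = 4 * 2^n := by ring
        linarith [this ▸ h3]
      have hfp : (0:ℝ) < (Nat.factorial n : ℝ) := by positivity
      have hr : 4 * ((2*M)^n / (Nat.factorial n:ℝ)) = (4*(2^n*M^n)) / (Nat.factorial n:ℝ) := by
        rw [mul_pow]; ring
      rw [hr, div_le_div_iff_of_pos_right hfp]
      nlinarith [pow_nonneg hM n, pow_nonneg (by norm_num : (0:ℝ) ≤ 2) n]
    · exact (Real.summable_pow_div_factorial (2*M)).mul_left 4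
  have h2 : Summable ((fun n : ℕ => ((n:ℝ)+2) * M^n / (Nat.factorial n)) ∘ (fun k => 2*k)) :=
    h1.comp_injective (fun a b h => by omega)
  apply h2.congr
  intro k
  simp only [Function.comp]
  push_cast
  ring_nf

/-- comparison with master series -/
lemma summable_of_le_master {f : ℕ → ℝ} (M : ℝ) (hM : 0 ≤ M)
    (h : ∀ k, |f k| ≤ ((2*(k:ℝ))+2) * M^(2*k) / (Nat.factorial (2*k))) : Summable f := by
  apply Summable.of_abs
  apply Summable.of_nonneg_of_le (fun k => abs_nonneg _) h (summable_master M hM)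

/-- The four bounds.  In all of them `1 ≤ M`, `|y| ≤ M`. -/
lemma boundA (hμ : 0 ≤ μ) {y M : ℝ} (hM : 1 ≤ M) (hy : |y| ≤ M) (k : ℕ) :
    |(-1:ℝ)^k * y^(2*k) / gammaMu μ (2*k)| ≤ ((2*(k:ℝ))+2) * M^(2*k) / (Nat.factorial (2*k)) := by
  have hM0 : (0:ℝ) ≤ M := le_trans zero_le_one hM
  have hg := gammaMu_pos hμ (2*k)
  have hfle := factorial_le_gammaMu hμ (2*k)
  have hfp : (0:ℝ) < (Nat.factorial (2*k) : ℝ) := by positivity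
  rw [abs_div, abs_mul, abs_pow, abs_pow, abs_neg, abs_one, one_pow, one_mul,
    abs_of_pos hg]
  apply div_le_div₀ (by positivity) _ hfp hfle
  calc |y|^(2*k) ≤ M^(2*k) := pow_le_pow_left₀ (abs_nonneg _) hy _
    _ ≤ ((2*(k:ℝ))+2) * M^(2*k) := by nlinarith [pow_nonneg hM0 (2*k)]

lemma boundC (hμ : 0 ≤ μ) {y M : ℝ} (hM : 1 ≤ M) (hy : |y| ≤ M) (k : ℕ) :
    |(-1:ℝ)^k * y^(2*k) / gammaMu μ (2*k+1)| ≤ ((2*(k:ℝ))+2) * M^(2*k) / (Nat.factorial (2*k)) := by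
  have hM0 : (0:ℝ) ≤ M := le_trans zero_le_one hM
  have hg := gammaMu_pos hμ (2*k+1)
  have hfle : (Nat.factorial (2*k) : ℝ) ≤ gammaMu μ (2*k+1) := by
    calc (Nat.factorial (2*k) : ℝ) ≤ (Nat.factorial (2*k+1) : ℝ) := by
          exact_mod_cast Nat.factorial_le (by omega)
      _ ≤ _ := factorial_le_gammaMu hμ (2*k+1)
  have hfp : (0:ℝ) < (Nat.factorial (2*k) : ℝ) := by positivity
  rw [abs_div, abs_mul, abs_pow, abs_pow, abs_neg, abs_one, one_pow, one_mul,
    abs_of_pos hg]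
  apply div_le_div₀ (by positivity) _ hfp hfle
  calc |y|^(2*k) ≤ M^(2*k) := pow_le_pow_left₀ (abs_nonneg _) hy _
    _ ≤ ((2*(k:ℝ))+2) * M^(2*k) := by nlinarith [pow_nonneg hM0 (2*k)]

lemma boundA' (hμ : 0 ≤ μ) {y M : ℝ} (hM : 1 ≤ M) (hy : |y| ≤ M) (k : ℕ) :
    |(-1:ℝ)^k * (2*(k:ℝ)) * y^(2*k-1) / gammaMu μ (2*k)| ≤
      ((2*(k:ℝ))+2) * M^(2*k) / (Nat.factorial (2*k)) := by
  have hM0 : (0:ℝ) ≤ M := le_trans zero_le_one hM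
  have hg := gammaMu_pos hμ (2*k)
  have hfle := factorial_le_gammaMu hμ (2*k)
  have hfp : (0:ℝ) < (Nat.factorial (2*k) : ℝ) := by positivity
  rw [abs_div, abs_mul, abs_mul, abs_pow, abs_pow, abs_neg, abs_one, one_pow, one_mul,
    abs_of_pos hg]
  apply div_le_div₀ (by positivity) _ hfp hfle
  have h1 : |y|^(2*k-1) ≤ M^(2*k) := by
    calc |y|^(2*k-1) ≤ M^(2*k-1) := pow_le_pow_left₀ (abs_nonneg _) hy _
      _ ≤ M^(2*k) := pow_le_pow_right₀ hM (by omega)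
  have h2 : |2*(k:ℝ)| = 2*(k:ℝ) := abs_of_nonneg (by positivity)
  rw [h2]
  have h3 : (0:ℝ) ≤ 2*(k:ℝ) := by positivity
  nlinarith [pow_nonneg (abs_nonneg y) (2*k-1), pow_nonneg hM0 (2*k)]

lemma boundC' (hμ : 0 ≤ μ) {y M : ℝ} (hM : 1 ≤ M) (hy : |y| ≤ M) (k : ℕ) :
    |(-1:ℝ)^k * (2*(k:ℝ)) * y^(2*k-1) / gammaMu μ (2*k+1)| ≤
      ((2*(k:ℝ))+2) * M^(2*k) / (Nat.factorial (2*k)) := by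
  have hM0 : (0:ℝ) ≤ M := le_trans zero_le_one hM
  have hg := gammaMu_pos hμ (2*k+1)
  have hfle : (Nat.factorial (2*k) : ℝ) ≤ gammaMu μ (2*k+1) := by
    calc (Nat.factorial (2*k) : ℝ) ≤ (Nat.factorial (2*k+1) : ℝ) := by
          exact_mod_cast Nat.factorial_le (by omega)
      _ ≤ _ := factorial_le_gammaMu hμ (2*k+1)
  have hfp : (0:ℝ) < (Nat.factorial (2*k) : ℝ) := by positivity
  rw [abs_div, abs_mul, abs_mul, abs_pow, abs_pow, abs_neg, abs_one, one_pow, one_mul,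
    abs_of_pos hg]
  apply div_le_div₀ (by positivity) _ hfp hfle
  have h1 : |y|^(2*k-1) ≤ M^(2*k) := by
    calc |y|^(2*k-1) ≤ M^(2*k-1) := pow_le_pow_left₀ (abs_nonneg _) hy _
      _ ≤ M^(2*k) := pow_le_pow_right₀ hM (by omega)
  have h2 : |2*(k:ℝ)| = 2*(k:ℝ) := abs_of_nonneg (by positivity)
  rw [h2]
  nlinarith [pow_nonneg (abs_nonneg y) (2*k-1), pow_nonneg hM0 (2*k), Nat.cast_nonneg (α := ℝ) k]

noncomputable def muA (μ x : ℝ) : ℝ := ∑' k : ℕ, (-1:ℝ)^k * x^(2*k) / gammaMu μ (2*k)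
noncomputable def muC (μ x : ℝ) : ℝ := ∑' k : ℕ, (-1:ℝ)^k * x^(2*k) / gammaMu μ (2*k+1)
noncomputable def muD (μ x : ℝ) : ℝ := ∑' k : ℕ, (-1:ℝ)^k * (2*(k:ℝ)) * x^(2*k-1) / gammaMu μ (2*k)
noncomputable def muE (μ x : ℝ) : ℝ := ∑' k : ℕ, (-1:ℝ)^k * (2*(k:ℝ)) * x^(2*k-1) / gammaMu μ (2*k+1)
noncomputable def muF (μ x : ℝ) : ℝ := muA μ x ^ 2 + (x * muC μ x)^2

lemma term_hasDerivAt (c d y : ℝ) (n : ℕ) :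
    HasDerivAt (fun z : ℝ => c * z^n / d) (c * n * y^(n-1) / d) y := by
  have h := ((hasDerivAt_pow n y).const_mul c).div_const d
  exact h.congr_deriv (by ring)

section deriv
variable (hμ : 0 ≤ μ)
include hμ

lemma summableA (y : ℝ) : Summable (fun k : ℕ => (-1:ℝ)^k * y^(2*k) / gammaMu μ (2*k)) := by
  have hM : (1:ℝ) ≤ |y| + 1 := by linarith [abs_nonneg y]
  exact summable_of_le_master _ (by positivity)
    (fun k => boundA hμ hM (by simp [abs_nonneg, le_add_of_nonneg_right]) k)

lemma summableC (y : ℝ) : Summable (fun k : ℕ => (-1:ℝ)^k * y^(2*k) / gammaMu μ (2*k+1)) := by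
  have hM : (1:ℝ) ≤ |y| + 1 := by linarith [abs_nonneg y]
  exact summable_of_le_master _ (by positivity)
    (fun k => boundC hμ hM (by simp [abs_nonneg, le_add_of_nonneg_right]) k)

lemma summableD (y : ℝ) :
    Summable (fun k : ℕ => (-1:ℝ)^k * (2*(k:ℝ)) * y^(2*k-1) / gammaMu μ (2*k)) := by
  have hM : (1:ℝ) ≤ |y| + 1 := by linarith [abs_nonneg y]
  exact summable_of_le_master _ (by positivity)
    (fun k => boundA' hμ hM (by simp [abs_nonneg, le_add_of_nonneg_right]) k)

lemma summableE (y : ℝ) :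
    Summable (fun k : ℕ => (-1:ℝ)^k * (2*(k:ℝ)) * y^(2*k-1) / gammaMu μ (2*k+1)) := by
  have hM : (1:ℝ) ≤ |y| + 1 := by linarith [abs_nonneg y]
  exact summable_of_le_master _ (by positivity)
    (fun k => boundC' hμ hM (by simp [abs_nonneg, le_add_of_nonneg_right]) k)

lemma hasDerivAt_muA (x : ℝ) : HasDerivAt (muA μ) (muD μ x) x := by
  have hM : (1:ℝ) ≤ |x| + 1 := by linarith [abs_nonneg x]
  have hball : ∀ y ∈ Metric.ball (0:ℝ) (|x|+1), |y| ≤ |x| + 1 := by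
    intro y hy
    simp only [Metric.mem_ball, Real.dist_eq, sub_zero] at hy
    linarith
  have := hasDerivAt_tsum_of_isPreconnected (summable_master (|x|+1) (by positivity))
    (Metric.isOpen_ball) (convex_ball (0:ℝ) (|x|+1)).isPreconnected
    (g := fun k y => (-1:ℝ)^k * y^(2*k) / gammaMu μ (2*k))
    (g' := fun k y => (-1:ℝ)^k * (2*(k:ℝ)) * y^(2*k-1) / gammaMu μ (2*k))
    (fun k y _ => by
      have h := term_hasDerivAt ((-1:ℝ)^k) (gammaMu μ (2*k)) y (2*k)
      refine h.congr_deriv ?_; push_cast; ring)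
    (fun k y hy => boundA' hμ hM (hball y hy) k)
    (y₀ := x) (by simp only [Metric.mem_ball, Real.dist_eq, sub_zero]; linarith [abs_nonneg x])
    (summableA hμ x)
    (by simp only [Metric.mem_ball, Real.dist_eq, sub_zero]; linarith [abs_nonneg x])
  exact this

lemma hasDerivAt_muC (x : ℝ) : HasDerivAt (muC μ) (muE μ x) x := by
  have hM : (1:ℝ) ≤ |x| + 1 := by linarith [abs_nonneg x]
  have hball : ∀ y ∈ Metric.ball (0:ℝ) (|x|+1), |y| ≤ |x| + 1 := by
    intro y hy
    simp only [Metric.mem_ball, Real.dist_eq, sub_zero] at hy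
    linarith
  have := hasDerivAt_tsum_of_isPreconnected (summable_master (|x|+1) (by positivity))
    (Metric.isOpen_ball) (convex_ball (0:ℝ) (|x|+1)).isPreconnected
    (g := fun k y => (-1:ℝ)^k * y^(2*k) / gammaMu μ (2*k+1))
    (g' := fun k y => (-1:ℝ)^k * (2*(k:ℝ)) * y^(2*k-1) / gammaMu μ (2*k+1))
    (fun k y _ => by
      have h := term_hasDerivAt ((-1:ℝ)^k) (gammaMu μ (2*k+1)) y (2*k)
      refine h.congr_deriv ?_; push_cast; ring)
    (fun k y hy => boundC' hμ hM (hball y hy) k)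
    (y₀ := x) (by simp only [Metric.mem_ball, Real.dist_eq, sub_zero]; linarith [abs_nonneg x])
    (summableC hμ x)
    (by simp only [Metric.mem_ball, Real.dist_eq, sub_zero]; linarith [abs_nonneg x])
  exact this

end deriv

section ident
variable (hμ : 0 ≤ μ)
include hμ

/-- A' = -x C -/
lemma muD_eq (x : ℝ) : muD μ x = -x * muC μ x := by
  have hsum := summableD hμ x
  rw [muD, hsum.tsum_eq_zero_add]
  have h0 : (-1:ℝ)^(0:ℕ) * (2*((0:ℕ):ℝ)) * x^(2*0-1) / gammaMu μ (2*0) = 0 := by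
    norm_num
  rw [h0, zero_add]
  have hterm : ∀ k : ℕ, (-1:ℝ)^(k+1) * (2*((k+1:ℕ):ℝ)) * x^(2*(k+1)-1) / gammaMu μ (2*(k+1))
      = -x * ((-1:ℝ)^k * x^(2*k) / gammaMu μ (2*k+1)) := by
    intro k
    have e1 : 2*(k+1) = 2*k+2 := by ring
    have e2 : 2*k+2-1 = 2*k+1 := by omega
    rw [e1, e2, gammaMu_even]
    have hg : gammaMu μ (2*k+1) ≠ 0 := ne_of_gt (gammaMu_pos hμ _)
    have h2 : (2*(k:ℝ)+2) ≠ 0 := by positivity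
    have hcast : ((k+1:ℕ):ℝ) = (k:ℝ)+1 := by push_cast; ring
    rw [hcast]
    rw [pow_succ, pow_succ]
    field_simp
  rw [tsum_congr hterm, tsum_mul_left, muC]

/-- x E = A - (2μ+1) C -/
lemma muE_eq (x : ℝ) : x * muE μ x = muA μ x - (2*μ+1) * muC μ x := by
  have hsA := summableA hμ x
  have hsC := summableC hμ x
  have hterm : ∀ k : ℕ, x * ((-1:ℝ)^k * (2*(k:ℝ)) * x^(2*k-1) / gammaMu μ (2*k+1))
      = (-1:ℝ)^k * x^(2*k) / gammaMu μ (2*k)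
        - (2*μ+1) * ((-1:ℝ)^k * x^(2*k) / gammaMu μ (2*k+1)) := by
    intro k
    have hg0 : gammaMu μ (2*k) ≠ 0 := ne_of_gt (gammaMu_pos hμ _)
    have hg1 : gammaMu μ (2*k+1) ≠ 0 := ne_of_gt (gammaMu_pos hμ _)
    rw [gammaMu_odd (μ := μ) k] at hg1 ⊢
    have hco : (2*(k:ℝ)+1+2*μ) ≠ 0 := by
      have : (0:ℝ) < 2*(k:ℝ)+1+2*μ := by positivity
      exact ne_of_gt this
    rcases Nat.eq_zero_or_pos k with hk | hk
    · subst hk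
      have h1 : (1+2*μ) ≠ 0 := by positivity
      norm_num [gammaMu]
      field_simp
      ring
    · have e2 : 2*k-1+1 = 2*k := by omega
      have hxp : x * x^(2*k-1) = x^(2*k) := by
        conv_rhs => rw [← e2]
        rw [pow_succ]; ring
      field_simp
      rw [← hxp]
      ring
  rw [muE, ← tsum_mul_left, tsum_congr hterm, hsA.tsum_sub (hsC.mul_left _), tsum_mul_left]
  rfl

lemma hasDerivAt_muF (x : ℝ) : HasDerivAt (muF μ) (-(4*μ) * x * (muC μ x)^2) x := by
  have hA := hasDerivAt_muA hμ x
  have hC := hasDerivAt_muC hμ x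
  have hB : HasDerivAt (fun y => y * muC μ y) (1 * muC μ x + x * muE μ x) x :=
    (hasDerivAt_id x).mul hC
  have hF : HasDerivAt (muF μ)
      (2 * muA μ x ^ 1 * muD μ x + 2 * (x * muC μ x) ^ 1 * (1 * muC μ x + x * muE μ x)) x := by
    exact (hA.pow 2).add (hB.pow 2)
  have := hF
  rw [muD_eq hμ, muE_eq hμ] at this
  convert this using 1
  ring

end ident

lemma muA_zero : muA μ 0 = 1 := by
  rw [muA, tsum_eq_single 0]
  · norm_num [gammaMu]
  · intro k hk
    have : 2*k ≠ 0 := by omega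
    simp [zero_pow this]

lemma muC_zero (hμ : 0 ≤ μ) : 0 < muC μ 0 := by
  rw [muC, tsum_eq_single 0]
  · have := gammaMu_pos hμ 1
    norm_num
    positivity
  · intro k hk
    have : 2*k ≠ 0 := by omega
    simp [zero_pow this]

lemma muF_zero : muF μ 0 = 1 := by
  simp [muF, muA_zero]

lemma muA_even (x : ℝ) : muA μ (-x) = muA μ x := by
  apply tsum_congr
  intro k
  rw [(even_two_mul k).neg_pow x]

lemma muC_even (x : ℝ) : muC μ (-x) = muC μ x := by
  apply tsum_congr
  intro k
  rw [(even_two_mul k).neg_pow x]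

lemma muF_even (x : ℝ) : muF μ (-x) = muF μ x := by
  rw [muF, muF, muA_even, muC_even, neg_mul, neg_sq]

lemma muF_lt_one (hμ : 0 < μ) {x : ℝ} (hx : 0 < x) : muF μ x < 1 := by
  have hμ' : (0:ℝ) ≤ μ := le_of_lt hμ
  have hdiff : ∀ y, HasDerivAt (muF μ) (-(4*μ) * y * (muC μ y)^2) y :=
    fun y => hasDerivAt_muF hμ' y
  have hderiv : ∀ y, deriv (muF μ) y = -(4*μ) * y * (muC μ y)^2 :=
    fun y => (hdiff y).deriv
  have hcont : Continuous (muF μ) :=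
    continuous_iff_continuousAt.2 (fun y => (hdiff y).continuousAt)
  -- C is positive near 0
  have hCcont : ContinuousAt (muC μ) 0 := (hasDerivAt_muC hμ' 0).continuousAt
  have hC0 : 0 < muC μ 0 := muC_zero hμ'
  have hev : ∀ᶠ y in nhds 0, 0 < muC μ y :=
    hCcont.eventually (eventually_gt_nhds hC0)
  obtain ⟨δ, hδ, hball⟩ := Metric.eventually_nhds_iff.1 hev
  set c := min (δ/2) x with hc
  have hc0 : 0 < c := lt_min (by linarith) hx
  have hcx : c ≤ x := min_le_right _ _
  have hcδ : c < δ := lt_of_le_of_lt (min_le_left _ _) (by linarith)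
  -- strict decrease on [0, c]
  have hstrict : StrictAntiOn (muF μ) (Set.Icc 0 c) := by
    apply strictAntiOn_of_deriv_neg (convex_Icc 0 c) hcont.continuousOn
    intro y hy
    rw [interior_Icc] at hy
    rw [hderiv]
    have hy0 : 0 < y := hy.1
    have hyδ : dist y 0 < δ := by
      rw [Real.dist_eq, sub_zero, abs_of_pos hy0]
      exact lt_trans hy.2 hcδ
    have hCy : 0 < muC μ y := hball hyδ
    have : 0 < 4*μ*y*(muC μ y)^2 := by positivity
    linarith
  -- antitone on [0, ∞)
  have hanti : AntitoneOn (muF μ) (Set.Ici 0) := by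
    apply antitoneOn_of_deriv_nonpos (convex_Ici 0) hcont.continuousOn
    · intro y hy
      exact (hdiff y).differentiableAt.differentiableWithinAt
    · intro y hy
      rw [interior_Ici] at hy
      rw [hderiv]
      have hy0 : 0 < y := hy
      have h4 : (0:ℝ) ≤ 4*μ*y*(muC μ y)^2 :=
        mul_nonneg (mul_nonneg (by linarith) hy0.le) (sq_nonneg _)
      linarith
  have h1 : muF μ c < muF μ 0 :=
    hstrict ⟨le_refl 0, hc0.le⟩ ⟨hc0.le, le_refl c⟩ hc0
  have h2 : muF μ x ≤ muF μ c := hanti (Set.mem_Ici.2 hc0.le) (Set.mem_Ici.2 (le_trans hc0.le hcx)) hcx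
  rw [muF_zero] at h1
  linarith

set_option maxHeartbeats 1000000 in
lemma expMu_eq (hμ : 0 ≤ μ) (x : ℝ) :
    expMu μ (Complex.I * x) = (muA μ x : ℂ) + ((x * muC μ x : ℝ) : ℂ) * Complex.I := by
  have hnorm : ∀ n : ℕ, ‖(Complex.I * x)^n / (gammaMu μ n : ℂ)‖ = |x|^n / gammaMu μ n := by
    intro n
    rw [norm_div, norm_pow]
    have h1 : ‖Complex.I * (x:ℂ)‖ = |x| := by
      rw [norm_mul, Complex.norm_I, one_mul, Complex.norm_real, Real.norm_eq_abs]
    have h2 : ‖(gammaMu μ n : ℂ)‖ = gammaMu μ n := by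
      rw [Complex.norm_real, Real.norm_eq_abs, abs_of_pos (gammaMu_pos hμ n)]
    rw [h1, h2]
  have hsum : Summable (fun n : ℕ => (Complex.I * x)^n / (gammaMu μ n : ℂ)) := by
    apply Summable.of_norm
    apply Summable.of_nonneg_of_le (fun n => norm_nonneg _)
      (f := fun n => |x|^n / (Nat.factorial n : ℝ))
    · intro n
      rw [hnorm n]
      have hg := gammaMu_pos hμ n
      have hf := factorial_le_gammaMu hμ n
      have hfp : (0:ℝ) < (Nat.factorial n : ℝ) := by positivity
      apply div_le_div₀ (by positivity) le_rfl hfp hf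
    · exact Real.summable_pow_div_factorial |x|
  have he : Summable (fun k : ℕ => (Complex.I * x)^(2*k) / (gammaMu μ (2*k) : ℂ)) :=
    hsum.comp_injective (fun a b h => by omega)
  have ho : Summable (fun k : ℕ => (Complex.I * x)^(2*k+1) / (gammaMu μ (2*k+1) : ℂ)) :=
    hsum.comp_injective (fun a b h => by omega)
  rw [expMu, ← tsum_even_add_odd he ho]
  have heven : ∀ k : ℕ, (Complex.I * x)^(2*k) / (gammaMu μ (2*k) : ℂ)
      = (((-1:ℝ)^k * x^(2*k) / gammaMu μ (2*k) : ℝ) : ℂ) := by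
    intro k
    have h1 : (Complex.I * (x:ℂ))^(2*k) = ((-1:ℝ)^k * x^(2*k) : ℝ) := by
      rw [pow_mul, mul_pow, Complex.I_sq]
      push_cast
      rw [mul_pow, pow_mul]
    rw [h1]
    push_cast
    ring
  have hodd : ∀ k : ℕ, (Complex.I * x)^(2*k+1) / (gammaMu μ (2*k+1) : ℂ)
      = Complex.I * (((-1:ℝ)^k * x^(2*k+1) / gammaMu μ (2*k+1) : ℝ) : ℂ) := by
    intro k
    have h1 : (Complex.I * (x:ℂ))^(2*k) = ((-1:ℝ)^k * x^(2*k) : ℝ) := by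
      rw [pow_mul, mul_pow, Complex.I_sq]
      push_cast
      rw [mul_pow, pow_mul]
    rw [pow_succ, h1]
    push_cast
    ring
  rw [tsum_congr heven, tsum_congr hodd, tsum_mul_left, ← Complex.ofReal_tsum,
    ← Complex.ofReal_tsum]
  have hB : ∑' k : ℕ, (-1:ℝ)^k * x^(2*k+1) / gammaMu μ (2*k+1) = x * muC μ x := by
    have : ∀ k : ℕ, (-1:ℝ)^k * x^(2*k+1) / gammaMu μ (2*k+1)
        = x * ((-1:ℝ)^k * x^(2*k) / gammaMu μ (2*k+1)) := by
      intro k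
      rw [pow_succ]
      ring
    rw [tsum_congr this, tsum_mul_left, muC]
  rw [hB]
  simp only [muA]
  ring

set_option maxHeartbeats 1000000 in
theorem abs_expMu_lt_one (μ : ℝ) (hμ : 0 < μ) (x : ℝ) (hx : x ≠ 0) :
    ‖expMu μ (Complex.I * x)‖ < 1 := by
  have hμ' : (0:ℝ) ≤ μ := hμ.le
  rw [expMu_eq hμ' x, Complex.norm_add_mul_I]
  have hF : muA μ x ^ 2 + (x * muC μ x)^2 = muF μ x := rfl
  rw [hF]
  have hlt : muF μ x < 1 := by
    rcases lt_or_gt_of_ne hx with h | h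
    · rw [show x = -(-x) from (neg_neg x).symm, muF_even]
      exact muF_lt_one hμ (by linarith)
    · exact muF_lt_one hμ h
  have hnn : 0 ≤ muF μ x := by
    rw [← hF]; positivity
  calc Real.sqrt (muF μ x) < Real.sqrt 1 := Real.sqrt_lt_sqrt hnn hlt
    _ = 1 := Real.sqrt_one
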